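/- If A is a ≪-unital C*-algebra (i.e., A has a subset U of the positive unit ball that is ≪-directed and ≪-approximately cofinal), then every quotient of A by a closed two-sided ideal is ≪-unital. -/

import Mathlib

open scoped NNReal ENNReal
open Filter Topology

section StarSmul

variable {A : Type*}
    [NonUnitalNormedRing A] [StarRing A] [CStarRing A]
    [NormedSpace ℂ A] [IsScalarTower ℂ A A] [SMulCommClass ℂ A A]

/-- Even without a `StarModule ℂ A` assumption, `star` commutes with *real* scalars:
it does so with rational ones for algebraic reasons, and `star` is continuous. -/
lemma star_realCast_smul (r : ℝ) (a : A) : star ((r : ℂ) • a) = (r : ℂ) • star a := by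
  have h1 : Continuous fun r : ℝ => star ((r : ℂ) • a) :=
    continuous_star.comp (Complex.continuous_ofReal.smul continuous_const)
  have h2 : Continuous fun r : ℝ => (r : ℂ) • star a :=
    Complex.continuous_ofReal.smul continuous_const
  have key : (fun r : ℝ => star ((r : ℂ) • a)) = fun r : ℝ => (r : ℂ) • star a := by
    refine Rat.denseRange_cast.equalizer h1 h2 (funext fun q => ?_)
    have hq : (((q : ℝ) : ℂ)) = (q : ℂ) := by push_cast; ring
    simp only [Function.comp_apply, hq]
    exact star_ratCast_smul q a
  exact congrFun key r

section Order

variable [PartialOrder A] [StarOrderedRing A]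

lemma realCast_smul_nonneg {r : ℝ} (hr : 0 ≤ r) {a : A} (ha : 0 ≤ a) : 0 ≤ (r : ℂ) • a := by
  rw [StarOrderedRing.nonneg_iff] at ha ⊢
  induction ha using AddSubmonoid.closure_induction with
  | mem x hx =>
    obtain ⟨s, rfl⟩ := hx
    set t : ℝ := Real.sqrt r with ht
    have : (r : ℂ) • (star s * s) = star ((t : ℂ) • s) * ((t : ℂ) • s) := by
      rw [star_realCast_smul, smul_mul_assoc, mul_smul_comm, smul_smul]
      norm_cast
      rw [Real.mul_self_sqrt hr]
    rw [this]
    exact AddSubmonoid.subset_closure ⟨(t : ℂ) • s, rfl⟩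
  | zero => simpa using zero_mem _
  | add x y hx hy hx' hy' => rw [smul_add]; exact add_mem hx' hy'

end Order

end StarSmul

section Contractive

variable {A B : Type*}
    [NonUnitalNormedRing A] [StarRing A] [CStarRing A]
    [NormedSpace ℂ A] [IsScalarTower ℂ A A] [SMulCommClass ℂ A A] [CompleteSpace A]

/-- For a selfadjoint element of a C⋆-ring, the spectral radius (computed in the
unitization) equals the norm. This is proved without `StarModule ℂ A`. -/
lemma spectralRadius_inr_eq_of_isSelfAdjoint {x : A} (hx : IsSelfAdjoint x) :
    spectralRadius ℂ (x : Unitization ℂ A) = ‖x‖₊ := by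
  have key : ∀ n : ℕ, ‖(x : Unitization ℂ A) ^ 2 ^ n‖₊ = ‖x‖₊ ^ 2 ^ n := by
    have main : ∀ n : ℕ, ∃ w : A, IsSelfAdjoint w ∧
        (x : Unitization ℂ A) ^ 2 ^ n = (w : Unitization ℂ A) ∧ ‖w‖₊ = ‖x‖₊ ^ 2 ^ n := by
      intro n
      induction n with
      | zero => exact ⟨x, hx, by simp, by simp⟩
      | succ k ih =>
        obtain ⟨w, hw, hpow, hnorm⟩ := ih
        refine ⟨w * w, ?_, ?_, ?_⟩
        · rw [IsSelfAdjoint, star_mul, hw.star_eq]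
        · rw [pow_succ, pow_mul, hpow, sq, ← Unitization.inr_mul]
        · have : ‖w * w‖₊ = ‖w‖₊ * ‖w‖₊ := by
            have h := CStarRing.nnnorm_star_mul_self (x := w)
            rwa [hw.star_eq] at h
          rw [this, hnorm, pow_succ, pow_mul, sq]
    intro n
    obtain ⟨w, _, hpow, hnorm⟩ := main n
    rw [hpow, Unitization.nnnorm_inr, hnorm]
  have hconst : Tendsto (fun _n : ℕ => (‖x‖₊ : ℝ≥0∞)) atTop (𝓝 (‖x‖₊ : ℝ≥0∞)) :=
    tendsto_const_nhds
  refine tendsto_nhds_unique ?_ hconst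
  convert (spectrum.pow_nnnorm_pow_one_div_tendsto_nhds_spectralRadius
      (x : Unitization ℂ A)).comp
      (tendsto_pow_atTop_atTop_of_one_lt (r := (2 : ℕ)) one_lt_two) using 1
  refine funext fun n => ?_
  rw [Function.comp_apply, key n, ENNReal.coe_pow, ← ENNReal.rpow_natCast,
    ← ENNReal.rpow_mul]
  simp

variable [NonUnitalNormedRing B] [StarRing B] [CStarRing B]
    [NormedSpace ℂ B] [IsScalarTower ℂ B B] [SMulCommClass ℂ B B] [CompleteSpace B]

/-- A star homomorphism of (possibly twisted-module) C⋆-algebras is contractive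
on selfadjoint elements. -/
lemma norm_starHom_apply_le_of_isSelfAdjoint (π : A →⋆ₙₐ[ℂ] B) {x : A}
    (hx : IsSelfAdjoint x) : ‖π x‖ ≤ ‖x‖ := by
  let ψ : Unitization ℂ A →ₐ[ℂ] Unitization ℂ B :=
    ((Unitization.inrNonUnitalAlgHom ℂ B).comp π.toNonUnitalAlgHom).toAlgHom
  have hψ : ψ (x : Unitization ℂ A) = ((π x : B) : Unitization ℂ B) := by
    simp [ψ, NonUnitalAlgHom.toAlgHom]
  have hπx : IsSelfAdjoint (π x) := by
    rw [IsSelfAdjoint, ← map_star, hx.star_eq]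
  have h1 : spectralRadius ℂ ((π x : B) : Unitization ℂ B) ≤
      spectralRadius ℂ (x : Unitization ℂ A) := by
    rw [← hψ]
    exact iSup_le_iSup_of_subset (AlgHom.spectrum_apply_subset ψ _)
  rw [spectralRadius_inr_eq_of_isSelfAdjoint hπx,
    spectralRadius_inr_eq_of_isSelfAdjoint hx, ENNReal.coe_le_coe] at h1
  exact_mod_cast h1

/-- A star homomorphism of (possibly twisted-module) C⋆-algebras is contractive. -/
lemma norm_starHom_apply_le (π : A →⋆ₙₐ[ℂ] B) (a : A) : ‖π a‖ ≤ ‖a‖ := by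
  have h1 : ‖π a‖ * ‖π a‖ ≤ ‖a‖ * ‖a‖ := by
    rw [← CStarRing.norm_star_mul_self (x := π a), ← CStarRing.norm_star_mul_self (x := a),
      ← map_star, ← map_mul]
    exact norm_starHom_apply_le_of_isSelfAdjoint π (IsSelfAdjoint.star_mul_self a)
  nlinarith [norm_nonneg (π a), norm_nonneg a]

end Contractive

section Pos

variable {A B : Type*}
    [NonUnitalNormedRing A] [StarRing A] [CStarRing A]
    [NormedSpace ℂ A] [IsScalarTower ℂ A A] [SMulCommClass ℂ A A]
    [PartialOrder A] [StarOrderedRing A]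
    [NonUnitalNormedRing B] [StarRing B] [CStarRing B]
    [NormedSpace ℂ B] [IsScalarTower ℂ B B] [SMulCommClass ℂ B B]
    [PartialOrder B] [StarOrderedRing B]

lemma starHom_map_nonneg (π : A →⋆ₙₐ[ℂ] B) {a : A} (ha : 0 ≤ a) : 0 ≤ π a := by
  rw [StarOrderedRing.nonneg_iff] at ha
  induction ha using AddSubmonoid.closure_induction with
  | mem x hx =>
    obtain ⟨s, rfl⟩ := hx
    rw [map_mul, map_star]
    exact star_mul_self_nonneg (π s)
  | zero => simp
  | add x y hx hy hx' hy' => rw [map_add]; exact add_nonneg hx' hy'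

lemma starHom_exists_nonneg_preimage (π : A →⋆ₙₐ[ℂ] B) (hπ : Function.Surjective π)
    {b : B} (hb : 0 ≤ b) : ∃ a : A, 0 ≤ a ∧ π a = b := by
  rw [StarOrderedRing.nonneg_iff] at hb
  induction hb using AddSubmonoid.closure_induction with
  | mem x hx =>
    obtain ⟨s, rfl⟩ := hx
    obtain ⟨c, rfl⟩ := hπ s
    exact ⟨star c * c, star_mul_self_nonneg c, by rw [map_mul, map_star]⟩
  | zero => exact ⟨0, le_refl 0, map_zero π⟩
  | add x y hx hy hx' hy' =>
    obtain ⟨a₁, ha₁, rfl⟩ := hx'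
    obtain ⟨a₂, ha₂, rfl⟩ := hy'
    exact ⟨a₁ + a₂, add_nonneg ha₁ ha₂, map_add π a₁ a₂⟩

end Pos

/-- A C*-algebra is `≪`-unital if it has a subset `U` of the positive unit ball which is
`≪`-directed (for `a, b ∈ U` there is `u ∈ U` with `a = a*u` and `b = b*u`) and
`≪`-approximately cofinal (every positive `a` of norm at most one satisfies
`‖a - a*u‖ < ε` for some `u ∈ U`). -/
def LlUnital (A : Type*) [NonUnitalNormedRing A] [StarRing A] [CStarRing A]
    [NormedSpace ℂ A] [IsScalarTower ℂ A A] [SMulCommClass ℂ A A]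
    [PartialOrder A] [StarOrderedRing A] : Prop :=
  ∃ U : Set A,
    (∀ u ∈ U, 0 ≤ u ∧ ‖u‖ ≤ 1) ∧
    (∀ a ∈ U, ∀ b ∈ U, ∃ u ∈ U, a = a * u ∧ b = b * u) ∧
    (∀ a : A, 0 ≤ a → ‖a‖ ≤ 1 → ∀ ε : ℝ, 0 < ε → ∃ u ∈ U, ‖a - a * u‖ < ε)

/-- If a C*-algebra is `≪`-unital then so is every quotient of it, i.e. every image
under a surjective star algebra homomorphism (the quotient by a closed two-sided
ideal being such an image). -/
theorem stmt_15 {A B : Type*}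
    [NonUnitalNormedRing A] [StarRing A] [CStarRing A]
    [NormedSpace ℂ A] [IsScalarTower ℂ A A] [SMulCommClass ℂ A A]
    [PartialOrder A] [StarOrderedRing A] [CompleteSpace A]
    [NonUnitalNormedRing B] [StarRing B] [CStarRing B]
    [NormedSpace ℂ B] [IsScalarTower ℂ B B] [SMulCommClass ℂ B B]
    [PartialOrder B] [StarOrderedRing B] [CompleteSpace B]
    (π : A →⋆ₙₐ[ℂ] B) (hπ : Function.Surjective π)
    (hA : LlUnital A) : LlUnital B := by
  obtain ⟨U, h1, h2, h3⟩ := hA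
  refine ⟨π '' U, ?_, ?_, ?_⟩
  · rintro v ⟨u, hu, rfl⟩
    exact ⟨starHom_map_nonneg π (h1 u hu).1, (norm_starHom_apply_le π u).trans (h1 u hu).2⟩
  · rintro a ⟨x, hx, rfl⟩ b ⟨y, hy, rfl⟩
    obtain ⟨u, hu, hxu, hyu⟩ := h2 x hx y hy
    exact ⟨π u, ⟨u, hu, rfl⟩, by rw [← map_mul, ← hxu], by rw [← map_mul, ← hyu]⟩
  · intro b hb hb1 ε hε
    obtain ⟨a, ha, rfl⟩ := starHom_exists_nonneg_preimage π hπ hb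
    by_cases hA0 : a = 0
    · obtain ⟨u, hu, -⟩ := h3 0 le_rfl (by simp) ε hε
      exact ⟨π u, ⟨u, hu, rfl⟩, by simpa [hA0] using hε⟩
    · have hr : (0 : ℝ) < ‖a‖ := norm_pos_iff.mpr hA0
      set c : A := ((‖a‖⁻¹ : ℝ) : ℂ) • a with hc
      have hc0 : 0 ≤ c := realCast_smul_nonneg (inv_nonneg.mpr hr.le) ha
      have hc1 : ‖c‖ ≤ 1 := by
        rw [hc, norm_smul, Complex.norm_real, Real.norm_eq_abs,
          abs_of_nonneg (inv_nonneg.mpr hr.le), inv_mul_cancel₀ hr.ne']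
      obtain ⟨u, hu, hcu⟩ := h3 c hc0 hc1 (ε / ‖a‖) (div_pos hε hr)
      refine ⟨π u, ⟨u, hu, rfl⟩, ?_⟩
      have ha_eq : a = ((‖a‖ : ℝ) : ℂ) • c := by
        rw [hc, smul_smul, ← Complex.ofReal_mul, mul_inv_cancel₀ hr.ne',
          Complex.ofReal_one, one_smul]
      have hdiff : a - a * u = ((‖a‖ : ℝ) : ℂ) • (c - c * u) := by
        rw [smul_sub, ← smul_mul_assoc, ← ha_eq]
      have hle : ‖π a - π a * π u‖ ≤ ‖a - a * u‖ := by
        rw [← map_mul, ← map_sub]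
        exact norm_starHom_apply_le π _
      have hlt : ‖a - a * u‖ < ε := by
        rw [hdiff, norm_smul, Complex.norm_real, Real.norm_eq_abs, abs_of_nonneg hr.le]
        calc ‖a‖ * ‖c - c * u‖ < ‖a‖ * (ε / ‖a‖) := by
              exact mul_lt_mul_of_pos_left hcu hr
          _ = ε := by field_simp
      exact hle.trans_lt hlt
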